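/- arXiv:1110.2407 — 3 statements merged into one kernel-verified Lean document; each statement's English description precedes it below -/
import Mathlib

section
/- In any GK-model, the double negation shift schemes ¬¬□φ → □¬¬φ and ◇¬¬φ → ¬¬◇φ are valid. -/
open scoped Classical

noncomputable def gimp (a b : ℝ) : ℝ := if a ≤ b then 1 else b

inductive GForm : Type where
  | bot : GForm
  | var : ℕ → GForm
  | and : GForm → GForm → GForm
  | or : GForm → GForm → GForm
  | imp : GForm → GForm → GForm
  | box : GForm → GForm
  | dia : GForm → GForm

def GForm.neg (φ : GForm) : GForm := φ.imp .bot

noncomputable def ev {W : Type} (S : W → W → ℝ) (e : ℕ → W → ℝ) : GForm → W → ℝ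
  | .bot, _ => 0
  | .var p, x => e p x
  | .and φ ψ, x => min (ev S e φ x) (ev S e ψ x)
  | .or φ ψ, x => max (ev S e φ x) (ev S e ψ x)
  | .imp φ ψ, x => gimp (ev S e φ x) (ev S e ψ x)
  | .box φ, x => ⨅ y, gimp (S x y) (ev S e φ y)
  | .dia φ, x => ⨆ y, min (S x y) (ev S e φ y)

lemma gimp_nonneg {a b : ℝ} (hb : 0 ≤ b) : 0 ≤ gimp a b := by
  unfold gimp; split <;> linarith

lemma gimp_le_one {a b : ℝ} (hb : b ≤ 1) : gimp a b ≤ 1 := by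
  unfold gimp; split <;> linarith

lemma gimp_eq_one {a b : ℝ} (h : a ≤ b) : gimp a b = 1 := by
  simp [gimp, h]

lemma ev_mem {W : Type} [Nonempty W] (S : W → W → ℝ) (e : ℕ → W → ℝ)
    (hS : ∀ x y, S x y ∈ Set.Icc (0:ℝ) 1) (he : ∀ p x, e p x ∈ Set.Icc (0:ℝ) 1)
    (φ : GForm) : ∀ x, ev S e φ x ∈ Set.Icc (0:ℝ) 1 := by
  induction φ with
  | bot => intro x; exact ⟨le_refl 0, zero_le_one⟩
  | var p => exact he p
  | and φ ψ ih1 ih2 =>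
    intro x
    exact ⟨le_min (ih1 x).1 (ih2 x).1, min_le_of_left_le (ih1 x).2⟩
  | or φ ψ ih1 ih2 =>
    intro x
    exact ⟨le_max_of_le_left (ih1 x).1, max_le (ih1 x).2 (ih2 x).2⟩
  | imp φ ψ ih1 ih2 =>
    intro x
    exact ⟨gimp_nonneg (ih2 x).1, gimp_le_one (ih2 x).2⟩
  | box φ ih =>
    intro x
    have hbdd : BddBelow (Set.range fun y => gimp (S x y) (ev S e φ y)) := by
      refine ⟨0, ?_⟩; rintro _ ⟨y, rfl⟩; exact gimp_nonneg (ih y).1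
    constructor
    · exact le_ciInf fun y => gimp_nonneg (ih y).1
    · exact le_trans (ciInf_le hbdd (Classical.arbitrary W))
        (gimp_le_one (ih _).2)
  | dia φ ih =>
    intro x
    have hbdd : BddAbove (Set.range fun y => min (S x y) (ev S e φ y)) := by
      refine ⟨1, ?_⟩; rintro _ ⟨y, rfl⟩
      exact min_le_of_left_le (hS x y).2
    constructor
    · refine le_trans (le_min (hS x (Classical.arbitrary W)).1
        (ih (Classical.arbitrary W)).1) ?_
      exact le_ciSup hbdd (Classical.arbitrary W)
    · exact ciSup_le fun y => min_le_of_left_le (hS x y).2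

theorem stmt5 (W : Type) [Nonempty W] (S : W → W → ℝ) (e : ℕ → W → ℝ)
    (hS : ∀ x y, S x y ∈ Set.Icc (0:ℝ) 1) (he : ∀ p x, e p x ∈ Set.Icc (0:ℝ) 1)
    (φ : GForm) (x : W) :
    ev S e (.imp (GForm.neg (GForm.neg (.box φ))) (.box (GForm.neg (GForm.neg φ)))) x = 1 ∧
    ev S e (.imp (.dia (GForm.neg (GForm.neg φ))) (GForm.neg (GForm.neg (.dia φ)))) x = 1 := by
  have hev := ev_mem S e hS he
  constructor
  · -- ¬¬□φ → □¬¬φ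
    show gimp _ _ = 1
    apply gimp_eq_one
    set A := ev S e (.box φ) x with hA
    show gimp (gimp A 0) 0 ≤ ev S e (.box (GForm.neg (GForm.neg φ))) x
    by_cases h : A ≤ 0
    · rw [gimp_eq_one h]
      have : gimp (1:ℝ) 0 = 0 := by simp [gimp]
      rw [this]
      exact (hev _ x).1
    · have h1 : gimp A 0 = 0 := by simp [gimp, h]
      rw [h1, gimp_eq_one le_rfl]
      push_neg at h
      show (1:ℝ) ≤ ⨅ y, gimp (S x y) (ev S e (GForm.neg (GForm.neg φ)) y)
      apply le_ciInf
      intro y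
      have hbdd : BddBelow (Set.range fun y => gimp (S x y) (ev S e φ y)) := by
        refine ⟨0, ?_⟩; rintro _ ⟨z, rfl⟩; exact gimp_nonneg (hev φ z).1
      have hAle : A ≤ gimp (S x y) (ev S e φ y) := by
        rw [hA]; exact ciInf_le hbdd y
      have hpos : 0 < gimp (S x y) (ev S e φ y) := lt_of_lt_of_le h hAle
      by_cases hS0 : S x y ≤ 0
      · have hrw : ev S e (GForm.neg (GForm.neg φ)) y
            = gimp (gimp (ev S e φ y) 0) 0 := rfl
        rw [hrw]
        exact le_of_eq (gimp_eq_one (le_trans hS0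
          (gimp_nonneg le_rfl))).symm
      · push_neg at hS0
        have hevpos : 0 < ev S e φ y := by
          by_cases hle : S x y ≤ ev S e φ y
          · exact lt_of_lt_of_le hS0 hle
          · simpa [gimp, hle] using hpos
        have hnn : ev S e (GForm.neg (GForm.neg φ)) y = 1 := by
          show gimp (gimp (ev S e φ y) 0) 0 = 1
          have : gimp (ev S e φ y) 0 = 0 := by simp [gimp, not_le.2 hevpos]
          rw [this]; exact gimp_eq_one le_rfl
        rw [hnn]
        exact le_of_eq (gimp_eq_one (hS x y).2).symm
  · -- ◇¬¬φ → ¬¬◇φ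
    show gimp _ _ = 1
    apply gimp_eq_one
    set B := ev S e (.dia φ) x with hB
    show ev S e (.dia (GForm.neg (GForm.neg φ))) x ≤ gimp (gimp B 0) 0
    by_cases h : B ≤ 0
    · rw [gimp_eq_one h]
      have h10 : gimp (1:ℝ) 0 = 0 := by simp [gimp]
      rw [h10]
      show (⨆ y, min (S x y) (ev S e (GForm.neg (GForm.neg φ)) y)) ≤ 0
      apply ciSup_le
      intro y
      have hbdd : BddAbove (Set.range fun z => min (S x z) (ev S e φ z)) := by
        refine ⟨1, ?_⟩; rintro _ ⟨z, rfl⟩; exact min_le_of_left_le (hS x z).2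
      have hle : min (S x y) (ev S e φ y) ≤ 0 :=
        le_trans (le_ciSup hbdd y) h
      by_cases hc : S x y ≤ ev S e φ y
      · have : S x y ≤ 0 := by simpa [min_eq_left hc] using hle
        exact min_le_of_left_le this
      · have hz : ev S e φ y ≤ 0 := by
          push_neg at hc
          simpa [min_eq_right hc.le] using hle
        have hnn : ev S e (GForm.neg (GForm.neg φ)) y = 0 := by
          show gimp (gimp (ev S e φ y) 0) 0 = 0
          rw [gimp_eq_one hz]; simp [gimp]
        exact min_le_of_right_le (le_of_eq hnn)
    · have h1 : gimp B 0 = 0 := by simp [gimp, h]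
      rw [h1, gimp_eq_one le_rfl]
      exact (hev _ x).2
end

section
/- For any cardinal κ strictly greater than the cardinality of a linearly ordered Heyting algebra H, the theory T = {(p_β → p_α) → q : α < β < κ} semantically entails q over H-valued valuations (any valuation making all formulas of T equal to 1 makes q equal to 1), but no finite subset of T entails q over [0,1]-valued valuations. Hence Gödel-Dummett logic is not strongly complete for theories of arbitrary cardinality over any fixed linearly ordered Heyting algebra. -/
open scoped Classical

theorem stmt17 (H : Type) [HeytingAlgebra H]
    (htot : ∀ a b : H, a ≤ b ∨ b ≤ a)
    (ι : Type) [LinearOrder ι] (hκ : Cardinal.mk H < Cardinal.mk ι) :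
    (∀ (vp : ι → H) (vq : H),
        (∀ α β : ι, α < β → ((vp β ⇨ vp α) ⇨ vq) = ⊤) → vq = ⊤) ∧
    (∀ Δ : Finset (ι × ι),
        ∃ (vp : ι → ℝ) (vq : ℝ),
          (∀ α, vp α ∈ Set.Icc (0:ℝ) 1) ∧ vq ∈ Set.Icc (0:ℝ) 1 ∧ vq < 1 ∧
          ∀ pr ∈ Δ, pr.1 < pr.2 → gimp (gimp (vp pr.2) (vp pr.1)) vq = 1) := by
  constructor
  · intro vp vq h
    by_contra hq
    have hmono : ∀ α β : ι, α < β → vp α < vp β := by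
      intro α β hab
      have h1 := h α β hab
      have h2 : ¬ (vp β ≤ vp α) := by
        intro hle
        have ht : vp β ⇨ vp α = ⊤ := himp_eq_top_iff.2 hle
        rw [ht, top_himp] at h1
        exact hq h1
      rcases htot (vp α) (vp β) with h3 | h3
      · exact lt_of_le_of_ne h3 (fun e => h2 e.ge)
      · exact absurd h3 h2
    have hinj : Function.Injective vp := by
      intro a b hab
      rcases lt_trichotomy a b with h'|h'|h'
      · exact absurd hab (ne_of_lt (hmono _ _ h'))
      · exact h'
      · exact absurd hab.symm (ne_of_lt (hmono _ _ h'))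
    exact absurd (Cardinal.mk_le_of_injective hinj) (not_le.2 hκ)
  · intro Δ
    set S : Finset ι := Δ.image Prod.fst ∪ Δ.image Prod.snd with hS
    set n : ℕ := S.card with hn
    have hpos : (0:ℝ) < (n:ℝ) + 1 := by positivity
    refine ⟨fun α => ((S.filter (· < α)).card : ℝ) / ((n:ℝ)+1), (n:ℝ) / ((n:ℝ)+1),
      ?_, ?_, ?_, ?_⟩
    · intro α
      constructor
      · positivity
      · rw [div_le_one hpos]
        have : (S.filter (· < α)).card ≤ n := Finset.card_filter_le _ _
        exact_mod_cast le_trans (Nat.cast_le.2 this) (by linarith)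
    · constructor
      · positivity
      · rw [div_le_one hpos]; linarith
    · rw [div_lt_one hpos]; linarith
    · intro pr hpr hlt
      have h1S : pr.1 ∈ S := Finset.mem_union_left _ (Finset.mem_image_of_mem _ hpr)
      have h2S : pr.2 ∈ S := Finset.mem_union_right _ (Finset.mem_image_of_mem _ hpr)
      have hsub : S.filter (· < pr.1) ⊂ S.filter (· < pr.2) := by
        constructor
        · intro x hx
          simp only [Finset.mem_filter] at hx ⊢
          exact ⟨hx.1, lt_trans hx.2 hlt⟩
        · intro hcon
          have : pr.1 ∈ S.filter (· < pr.1) := hcon (Finset.mem_filter.2 ⟨h1S, hlt⟩)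
          simp at this
      have hcard : (S.filter (· < pr.1)).card < (S.filter (· < pr.2)).card :=
        Finset.card_lt_card hsub
      have hcardn : (S.filter (· < pr.1)).card < n := by
        apply Finset.card_lt_card
        constructor
        · exact Finset.filter_subset _ _
        · intro hcon
          have : pr.2 ∈ S.filter (· < pr.1) := hcon h2S
          have := (Finset.mem_filter.1 this).2
          exact absurd (lt_trans hlt this) (lt_irrefl _)
      have hv12 : ((S.filter (· < pr.1)).card : ℝ) / ((n:ℝ)+1)
          < ((S.filter (· < pr.2)).card : ℝ) / ((n:ℝ)+1) := by
        gcongr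
      have hv1q : ((S.filter (· < pr.1)).card : ℝ) / ((n:ℝ)+1) ≤ (n:ℝ) / ((n:ℝ)+1) := by
        gcongr
      simp only [gimp, if_neg (not_le.2 hv12), if_pos hv1q]
end

section
/- Given a fuzzy frame F = (W, S) with S : W × W → [0,1], the structure [0,1]^F = ([0,1]^W, I^F, K^F), where ([0,1]^W is the product Gödel algebra and) I^F(f)(w) = inf_{w'} (S(w,w') ⇒ f(w')) and K^F(f)(w) = sup_{w'} min(S(w,w'), f(w')), is a bi-modal Gödel algebra: I^F(f ∧ g) = I^F(f) ∧ I^F(g), I^F(1) = 1, K^F(f ∨ g) = K^F(f) ∨ K^F(g), K^F(0) = 0, K^F(f) → I^F(g) ≤ I^F(f → g), and K^F(f → g) ≤ I^F(f) → K^F(g), where the lattice and Heyting operations on [0,1]^W are pointwise. -/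
open scoped Classical

noncomputable def IF {W : Type} (S : W → W → ℝ) (f : W → ℝ) : W → ℝ :=
  fun w => ⨅ w', gimp (S w w') (f w')

noncomputable def KF {W : Type} (S : W → W → ℝ) (f : W → ℝ) : W → ℝ :=
  fun w => ⨆ w', min (S w w') (f w')

lemma gimp_min {a b c : ℝ} (hb : b ≤ 1) (hc : c ≤ 1) :
    gimp a (min b c) = min (gimp a b) (gimp a c) := by
  unfold gimp
  rcases le_total b c with h | h <;>
    simp only [min_def, h, if_true] <;> split_ifs <;> first | rfl | linarith

lemma bddB {W : Type} (S : W → W → ℝ) (f : W → ℝ) (hf : ∀ v, 0 ≤ f v) (w : W) :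
    BddBelow (Set.range fun v => gimp (S w v) (f v)) := by
  refine ⟨0, ?_⟩; rintro x ⟨v, rfl⟩; exact gimp_nonneg (hf v)

lemma bddA {W : Type} (S : W → W → ℝ) (f : W → ℝ) (w : W) (hS : ∀ v, S w v ≤ 1) :
    BddAbove (Set.range fun v => min (S w v) (f v)) := by
  refine ⟨1, ?_⟩; rintro x ⟨v, rfl⟩; exact le_trans (min_le_left _ _) (hS v)

theorem stmt18 (W : Type) [Nonempty W] (S : W → W → ℝ)
    (hS : ∀ x y, S x y ∈ Set.Icc (0:ℝ) 1)
    (f g : W → ℝ) (hf : ∀ w, f w ∈ Set.Icc (0:ℝ) 1) (hg : ∀ w, g w ∈ Set.Icc (0:ℝ) 1) :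
    (IF S (fun w => min (f w) (g w)) = fun w => min (IF S f w) (IF S g w)) ∧
    (IF S (fun _ => 1) = fun _ => 1) ∧
    (KF S (fun w => max (f w) (g w)) = fun w => max (KF S f w) (KF S g w)) ∧
    (KF S (fun _ => 0) = fun _ => 0) ∧
    (∀ w, gimp (KF S f w) (IF S g w) ≤ IF S (fun v => gimp (f v) (g v)) w) ∧
    (∀ w, KF S (fun v => gimp (f v) (g v)) w ≤ gimp (IF S f w) (KF S g w)) := by
  have hf0 : ∀ v, 0 ≤ f v := fun v => (hf v).1
  have hg0 : ∀ v, 0 ≤ g v := fun v => (hg v).1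
  have hf1 : ∀ v, f v ≤ 1 := fun v => (hf v).2
  have hg1 : ∀ v, g v ≤ 1 := fun v => (hg v).2
  -- key term bounds
  have hIf_le : ∀ w v, IF S f w ≤ gimp (S w v) (f v) := fun w v =>
    ciInf_le (bddB S f hf0 w) v
  have hIg_le : ∀ w v, IF S g w ≤ gimp (S w v) (g v) := fun w v =>
    ciInf_le (bddB S g hg0 w) v
  have hKf_ge : ∀ w v, min (S w v) (f v) ≤ KF S f w := fun w v =>
    le_ciSup (bddA S f w (fun v => (hS w v).2)) v
  have hKg_ge : ∀ w v, min (S w v) (g v) ≤ KF S g w := fun w v =>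
    le_ciSup (bddA S g w (fun v => (hS w v).2)) v
  refine ⟨?_, ?_, ?_, ?_, ?_, ?_⟩
  · funext w
    apply le_antisymm
    · refine le_min ?_ ?_
      · exact ciInf_mono (bddB S _ (fun v => le_min (hf0 v) (hg0 v)) w)
          (fun v => by rw [gimp_min (hf1 v) (hg1 v)]; exact min_le_left _ _)
      · exact ciInf_mono (bddB S _ (fun v => le_min (hf0 v) (hg0 v)) w)
          (fun v => by rw [gimp_min (hf1 v) (hg1 v)]; exact min_le_right _ _)
    · refine le_ciInf fun v => ?_
      rw [gimp_min (hf1 v) (hg1 v)]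
      exact min_le_min (hIf_le w v) (hIg_le w v)
  · funext w
    have : ∀ v : W, gimp (S w v) 1 = 1 := fun v => by
      unfold gimp; split_ifs with h <;> [rfl; exact absurd (hS w v).2 h]
    simp only [IF, this, ciInf_const]
  · funext w
    apply le_antisymm
    · refine ciSup_le fun v => ?_
      rw [min_max_distrib_left]
      exact max_le_max (hKf_ge w v) (hKg_ge w v)
    · refine max_le ?_ ?_
      · exact ciSup_mono (bddA S _ w (fun v => (hS w v).2))
          (fun v => min_le_min le_rfl (le_max_left _ _))
      · exact ciSup_mono (bddA S _ w (fun v => (hS w v).2))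
          (fun v => min_le_min le_rfl (le_max_right _ _))
  · funext w
    have : ∀ v : W, min (S w v) (0:ℝ) = 0 := fun v => min_eq_right (hS w v).1
    simp only [KF, this, ciSup_const]
  · intro w
    refine le_ciInf fun v => ?_
    have hA := hKf_ge w v
    have hB := hIg_le w v
    set s := S w v with hs
    set A := KF S f w
    set B := IF S g w
    -- goal : gimp A B ≤ gimp s (gimp (f v) (g v))
    show gimp A B ≤ gimp s (gimp (f v) (g v))
    by_cases hfg : f v ≤ g v
    · have h1 : gimp (f v) (g v) = 1 := if_pos hfg
      have h2 : gimp s 1 = 1 := if_pos (hS w v).2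
      rw [h1, h2]
      exact gimp_le_one (le_trans hB (gimp_le_one (hg1 v)))
    · push_neg at hfg
      have h1 : gimp (f v) (g v) = g v := if_neg (not_le.2 hfg)
      rw [h1]
      by_cases hsg : s ≤ g v
      · have h2 : gimp s (g v) = 1 := if_pos hsg
        rw [h2]
        exact gimp_le_one (le_trans hB (gimp_le_one (hg1 v)))
      · push_neg at hsg
        have h2 : gimp s (g v) = g v := if_neg (not_le.2 hsg)
        rw [h2]
        have hBg : B ≤ g v := by rw [h2] at hB; exact hB
        have hAg : g v < A := lt_of_lt_of_le (lt_min hsg hfg) hA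
        have h3 : gimp A B = B := if_neg (not_le.2 (lt_of_le_of_lt hBg hAg))
        rw [h3]
        exact hBg
  · intro w
    refine ciSup_le fun v => ?_
    have hA := hIf_le w v
    have hB := hKg_ge w v
    set s := S w v with hs
    set A := IF S f w
    set B := KF S g w
    have hs1 : s ≤ 1 := (hS w v).2
    show min s (gimp (f v) (g v)) ≤ gimp A B
    by_cases hAB : A ≤ B
    · have h0 : gimp A B = 1 := if_pos hAB
      rw [h0]
      refine le_trans (min_le_left _ _) hs1
    · push_neg at hAB
      have h0 : gimp A B = B := if_neg (not_le.2 hAB)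
      rw [h0]
      by_cases hfg : f v ≤ g v
      · have h1 : gimp (f v) (g v) = 1 := if_pos hfg
        rw [h1]
        by_cases hsf : s ≤ f v
        · have : min s (g v) = s := min_eq_left (le_trans hsf hfg)
          rw [this] at hB
          exact le_trans (min_le_left _ _) hB
        · push_neg at hsf
          have hAf : A ≤ f v := by
            have : gimp s (f v) = f v := if_neg (not_le.2 hsf)
            rw [this] at hA; exact hA
          by_cases hsg : s ≤ g v
          · have : min s (g v) = s := min_eq_left hsg
            rw [this] at hB
            exact le_trans (min_le_left _ _) hB
          · push_neg at hsg
            have : min s (g v) = g v := min_eq_right hsg.le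
            rw [this] at hB
            exact absurd (le_trans hAf (le_trans hfg hB)) (not_le.2 hAB)
      · push_neg at hfg
        have h1 : gimp (f v) (g v) = g v := if_neg (not_le.2 hfg)
        rw [h1]
        exact hB
end
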